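/- (Sufficient global optimality for TTRS.) Let A, B ∈ ℝ^{n×n} be symmetric with B positive definite, a, c ∈ ℝⁿ, δ₁, δ₂ > 0. Suppose x* satisfies ‖x*‖² ≤ δ₁², (x*−c)ᵀB(x*−c) ≤ δ₂², and there exist γ*, μ* ≥ 0 with (A + γ* I + μ* B) x* = μ* B c − a, γ*(‖x*‖² − δ₁²) = 0, μ*((x*−c)ᵀB(x*−c) − δ₂²) = 0, and A + γ* I + μ* B positive semidefinite. Then x* is a global minimizer of (1/2)xᵀAx + aᵀx over {x : ‖x‖² ≤ δ₁², (x−c)ᵀB(x−c) ≤ δ₂²}. -/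

import Mathlib

open Matrix

theorem stmt_3 {n : ℕ}
    (A B : Matrix (Fin n) (Fin n) ℝ) (hA : A.IsSymm) (hB : B.PosDef)
    (a c : Fin n → ℝ) (δ₁ δ₂ : ℝ) (hδ₁ : 0 < δ₁) (hδ₂ : 0 < δ₂)
    (xstar : Fin n → ℝ)
    (hfeas1 : xstar ⬝ᵥ xstar ≤ δ₁ ^ 2)
    (hfeas2 : (xstar - c) ⬝ᵥ B.mulVec (xstar - c) ≤ δ₂ ^ 2)
    (γ μ : ℝ) (hγ : 0 ≤ γ) (hμ : 0 ≤ μ)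
    (hKKT : (A + γ • (1 : Matrix (Fin n) (Fin n) ℝ) + μ • B).mulVec xstar
        = μ • B.mulVec c - a)
    (hcs1 : γ * (xstar ⬝ᵥ xstar - δ₁ ^ 2) = 0)
    (hcs2 : μ * ((xstar - c) ⬝ᵥ B.mulVec (xstar - c) - δ₂ ^ 2) = 0)
    (hpsd : (A + γ • (1 : Matrix (Fin n) (Fin n) ℝ) + μ • B).PosSemidef) :
    ∀ x : Fin n → ℝ, x ⬝ᵥ x ≤ δ₁ ^ 2 → (x - c) ⬝ᵥ B.mulVec (x - c) ≤ δ₂ ^ 2 →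
      (1 / 2) * (xstar ⬝ᵥ A.mulVec xstar) + a ⬝ᵥ xstar ≤
        (1 / 2) * (x ⬝ᵥ A.mulVec x) + a ⬝ᵥ x := by
  intro x hx1 hx2
  have hBs : B.IsSymm := by
    have h := hB.1
    rw [Matrix.IsHermitian, conjTranspose] at h
    rwa [show Bᵀ.map star = Bᵀ from Matrix.ext fun _ _ => star_trivial _] at h
  have hsym : ∀ (M : Matrix (Fin n) (Fin n) ℝ), M.IsSymm → ∀ u v : Fin n → ℝ,
      u ⬝ᵥ M.mulVec v = v ⬝ᵥ M.mulVec u := by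
    intro M hM u v
    rw [dotProduct_mulVec, ← mulVec_transpose, hM, dotProduct_comm]
  -- scalar abbreviations via expansions
  have kktx := congrArg (fun v => x ⬝ᵥ v) hKKT
  have kkts := congrArg (fun v => xstar ⬝ᵥ v) hKKT
  simp only [add_mulVec, smul_mulVec, one_mulVec, dotProduct_add,
    dotProduct_smul, dotProduct_sub, smul_eq_mul] at kktx kkts
  have h0 := hpsd.dotProduct_mulVec_nonneg (x - xstar)
  simp only [star_trivial, add_mulVec, smul_mulVec, one_mulVec,
    mulVec_sub, dotProduct_add, dotProduct_smul, dotProduct_sub,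
    sub_dotProduct, smul_eq_mul] at h0
  -- expand constraint quadratics
  simp only [mulVec_sub, dotProduct_sub, sub_dotProduct] at hx2 hfeas2 hcs2
  -- symmetry rewrites
  have e1 : x ⬝ᵥ A.mulVec xstar = xstar ⬝ᵥ A.mulVec x := hsym A hA x xstar
  have e2 : x ⬝ᵥ B.mulVec xstar = xstar ⬝ᵥ B.mulVec x := hsym B hBs x xstar
  have e3 : x ⬝ᵥ B.mulVec c = c ⬝ᵥ B.mulVec x := hsym B hBs x c
  have e4 : xstar ⬝ᵥ B.mulVec c = c ⬝ᵥ B.mulVec xstar := hsym B hBs xstar c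
  have e5 : x ⬝ᵥ xstar = xstar ⬝ᵥ x := dotProduct_comm x xstar
  have e6 : a ⬝ᵥ x = x ⬝ᵥ a := dotProduct_comm a x
  have e7 : a ⬝ᵥ xstar = xstar ⬝ᵥ a := dotProduct_comm a xstar
  have hγ1 : 0 ≤ γ * (δ₁ ^ 2 - x ⬝ᵥ x) := mul_nonneg hγ (by linarith)
  have hμ1 : 0 ≤ μ * (δ₂ ^ 2 - (x ⬝ᵥ B.mulVec x - x ⬝ᵥ B.mulVec c -
      (c ⬝ᵥ B.mulVec x - c ⬝ᵥ B.mulVec c))) := mul_nonneg hμ (by linarith)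
  simp only [e1, e2, e3, e4, e5, e6, e7] at h0 kktx kkts hcs2 hμ1 hx2 hfeas2 ⊢
  linarith [h0, kktx, kkts, hcs1, hcs2, hγ1, hμ1]
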